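/- Let G be a finite simple graph on n ≥ 1 vertices with maximum degree Δ, and let d_u denote the degree of vertex u. Then for every real λ with 0 < λ ≤ 3/(Δ+1)², one has (1/n)·Σ_{u∈V(G)} λ/(1+(d_u+1)λ) ≤ E_G(λ). -/

import Mathlib

open scoped Classical

/-- The finset of independent sets of a finite simple graph (the empty set counts). -/
noncomputable def indepSets {V : Type*} [Fintype V] (G : SimpleGraph V) : Finset (Finset V) :=
  Finset.univ.filter fun I => ∀ u ∈ I, ∀ v ∈ I, ¬ G.Adj u v

/-- The hard-core partition function `Z_G(λ) = Σ_{I independent} λ^|I|`. -/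
noncomputable def hcZ {V : Type*} [Fintype V] (G : SimpleGraph V) (l : ℝ) : ℝ :=
  ∑ I ∈ indepSets G, l ^ I.card

/-- The occupancy fraction `E_G(λ) = λ Z_G'(λ)/(n Z_G(λ))`, i.e. `(1/n)` times the
expected size of an independent set from the hard-core model; note
`λ Z_G'(λ) = Σ_I |I| λ^|I|`. -/
noncomputable def hcE {V : Type*} [Fintype V] (G : SimpleGraph V) (l : ℝ) : ℝ :=
  (∑ I ∈ indepSets G, (I.card : ℝ) * l ^ I.card) / ((Fintype.card V : ℝ) * hcZ G l)

namespace OccAux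

open Finset

variable {V : Type*} [Fintype V] (G : SimpleGraph V) (l : ℝ)

lemma mem_indepSets {I : Finset V} : I ∈ indepSets G ↔ ∀ u ∈ I, ∀ w ∈ I, ¬ G.Adj u w := by
  simp [indepSets]

/-- Partition function restricted to independent sets avoiding the closed
neighborhood of `v`. -/
noncomputable def Qv (v : V) : ℝ :=
  ∑ I ∈ (indepSets G).filter (fun I => v ∉ I ∧ ∀ u ∈ I, ¬ G.Adj v u), l ^ I.card

lemma Qv_nonneg (hl : 0 < l) (v : V) : 0 ≤ Qv G l v :=
  Finset.sum_nonneg fun I _ => by positivity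

lemma sum_contain (v : V) :
    ∑ I ∈ (indepSets G).filter (fun I => v ∈ I), l ^ I.card = l * Qv G l v := by
  rw [Qv, Finset.mul_sum]
  refine Finset.sum_nbij' (fun I => I.erase v) (fun J => insert v J) ?_ ?_ ?_ ?_ ?_
  · intro I hI
    rw [Finset.mem_filter] at hI ⊢
    obtain ⟨hI1, hI2⟩ := hI
    rw [mem_indepSets] at hI1
    refine ⟨?_, Finset.notMem_erase _ _, ?_⟩
    · rw [mem_indepSets]
      intro a ha b hb
      exact hI1 a (Finset.mem_of_mem_erase ha) b (Finset.mem_of_mem_erase hb)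
    · intro u hu
      exact hI1 v hI2 u (Finset.mem_of_mem_erase hu)
  · intro J hJ
    rw [Finset.mem_filter] at hJ ⊢
    obtain ⟨hJ1, hJ2, hJ3⟩ := hJ
    rw [mem_indepSets] at hJ1
    refine ⟨?_, Finset.mem_insert_self _ _⟩
    rw [mem_indepSets]
    intro a ha b hb
    simp only [Finset.mem_insert] at ha hb
    obtain rfl | ha := ha
    · obtain rfl | hb := hb
      · exact G.loopless.irrefl _
      · exact hJ3 _ hb
    · obtain rfl | hb := hb
      · intro h; exact hJ3 a ha (G.adj_symm h)
      · exact hJ1 a ha b hb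
  · intro I hI
    rw [Finset.mem_filter] at hI
    exact Finset.insert_erase hI.2
  · intro J hJ
    rw [Finset.mem_filter] at hJ
    exact Finset.erase_insert hJ.2.1
  · intro I hI
    rw [Finset.mem_filter] at hI
    have : I.card = (I.erase v).card + 1 := by
      rw [Finset.card_erase_of_mem hI.2]
      have : 1 ≤ I.card := Finset.card_pos.mpr ⟨v, hI.2⟩
      omega
    rw [this, pow_succ]
    ring

/-- Swapping a double sum over neighborhoods. -/
lemma sum_neigh_swap (f : V → V → ℝ) :
    ∑ v, ∑ u ∈ G.neighborFinset v, f v u = ∑ v, ∑ u ∈ G.neighborFinset v, f u v := by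
  have h : ∀ g : V → V → ℝ,
      ∑ v, ∑ u ∈ G.neighborFinset v, g v u
        = ∑ v, ∑ u, if G.Adj v u then g v u else 0 := by
    intro g
    refine Finset.sum_congr rfl fun v _ => ?_
    rw [SimpleGraph.neighborFinset_eq_filter, Finset.sum_filter]
  rw [h, h, Finset.sum_comm]
  refine Finset.sum_congr rfl fun v _ => Finset.sum_congr rfl fun u _ => ?_
  simp only [G.adj_comm]

lemma sum_neigh_sq (x : V → ℝ) :
    ∑ v, ∑ u ∈ G.neighborFinset v, x v ^ 2 = ∑ v, (G.degree v : ℝ) * x v ^ 2 := by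
  refine Finset.sum_congr rfl fun v _ => ?_
  rw [Finset.sum_const, nsmul_eq_mul, G.card_neighborFinset_eq_degree]

/-- Lower bound for the quadratic form of `(1+l)·Id + l·Adj`. -/
lemma qf_lb (hl : 0 < l) (x : V → ℝ) :
    (1 + l - l * (G.maxDegree : ℝ)) * ∑ v, x v ^ 2
      ≤ ∑ v, x v * ((1 + l) * x v + l * ∑ u ∈ G.neighborFinset v, x u) := by
  have hswap : ∑ v, ∑ u ∈ G.neighborFinset v, x u ^ 2
      = ∑ v, (G.degree v : ℝ) * x v ^ 2 := by
    rw [sum_neigh_swap G (fun v u => x u ^ 2), sum_neigh_sq]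
  have hCC : ∑ v, x v * ∑ u ∈ G.neighborFinset v, x u
      = ∑ v, ∑ u ∈ G.neighborFinset v, x v * x u :=
    Finset.sum_congr rfl fun v _ => Finset.mul_sum _ _ _
  have hC : -∑ v, (G.degree v : ℝ) * x v ^ 2
      ≤ ∑ v, ∑ u ∈ G.neighborFinset v, x v * x u := by
    have h0 : (0:ℝ) ≤ ∑ v, ∑ u ∈ G.neighborFinset v, (x v + x u) ^ 2 :=
      Finset.sum_nonneg fun v _ => Finset.sum_nonneg fun u _ => sq_nonneg _
    have hinner : ∀ v, ∑ u ∈ G.neighborFinset v, (x v + x u) ^ 2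
        = ∑ u ∈ G.neighborFinset v, x v ^ 2 + ∑ u ∈ G.neighborFinset v, x u ^ 2
          + ∑ u ∈ G.neighborFinset v, 2 * (x v * x u) := by
      intro v
      rw [← Finset.sum_add_distrib, ← Finset.sum_add_distrib]
      exact Finset.sum_congr rfl fun u _ => by ring
    have hexp : ∑ v, ∑ u ∈ G.neighborFinset v, (x v + x u) ^ 2
        = 2 * ∑ v, (G.degree v : ℝ) * x v ^ 2
          + 2 * ∑ v, ∑ u ∈ G.neighborFinset v, x v * x u := by
      rw [Finset.sum_congr rfl fun v _ => hinner v, Finset.sum_add_distrib,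
        Finset.sum_add_distrib, hswap, sum_neigh_sq]
      have h3 : ∑ v, ∑ u ∈ G.neighborFinset v, 2 * (x v * x u)
          = 2 * ∑ v, ∑ u ∈ G.neighborFinset v, x v * x u := by
        rw [Finset.mul_sum]
        exact Finset.sum_congr rfl fun v _ => (Finset.mul_sum _ _ _).symm
      rw [h3]
      ring
    linarith
  have hdeg : ∑ v, (G.degree v : ℝ) * x v ^ 2
      ≤ (G.maxDegree : ℝ) * ∑ v, x v ^ 2 := by
    rw [Finset.mul_sum]
    refine Finset.sum_le_sum fun v _ => ?_
    have : (G.degree v : ℝ) ≤ (G.maxDegree : ℝ) := by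
      exact_mod_cast G.degree_le_maxDegree v
    exact mul_le_mul_of_nonneg_right this (sq_nonneg _)
  have hexp2 : ∑ v, x v * ((1 + l) * x v + l * ∑ u ∈ G.neighborFinset v, x u)
      = (1 + l) * ∑ v, x v ^ 2
        + l * ∑ v, x v * ∑ u ∈ G.neighborFinset v, x u := by
    rw [Finset.mul_sum, Finset.mul_sum, ← Finset.sum_add_distrib]
    exact Finset.sum_congr rfl fun v _ => by ring
  have h1 : l * (-∑ v, (G.degree v : ℝ) * x v ^ 2)
      ≤ l * ∑ v, ∑ u ∈ G.neighborFinset v, x v * x u :=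
    mul_le_mul_of_nonneg_left hC hl.le
  have h2 : l * ∑ v, (G.degree v : ℝ) * x v ^ 2
      ≤ l * ((G.maxDegree : ℝ) * ∑ v, x v ^ 2) :=
    mul_le_mul_of_nonneg_left hdeg hl.le
  rw [hexp2, hCC]
  nlinarith [h1, h2]


/-- The matrix `(1+l)·Id + l·Adj`. -/
noncomputable def Mm : Matrix V V ℝ := (1 + l) • (1 : Matrix V V ℝ) + l • (G.adjMatrix ℝ)

lemma Mm_mulVec (x : V → ℝ) (v : V) :
    (Mm G l).mulVec x v = (1 + l) * x v + l * ∑ u ∈ G.neighborFinset v, x u := by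
  simp [Mm, Matrix.add_mulVec, Matrix.smul_mulVec, Matrix.one_mulVec,
    SimpleGraph.adjMatrix_mulVec_apply]

lemma Mm_posDef (hl : 0 < l) (hD : l * (G.maxDegree : ℝ) < 1) : (Mm G l).PosDef := by
  rw [Matrix.posDef_iff_dotProduct_mulVec]
  constructor
  · ext i j
    simp [Mm, Matrix.conjTranspose_apply, Matrix.one_apply, SimpleGraph.adjMatrix_apply,
      G.adj_comm, eq_comm]
  · intro x hx
    have hdot : dotProduct (star x) ((Mm G l).mulVec x)
        = ∑ v, x v * ((1 + l) * x v + l * ∑ u ∈ G.neighborFinset v, x u) := by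
      simp only [dotProduct, star, Pi.star_apply, star_trivial]
      exact Finset.sum_congr rfl fun v _ => by rw [Mm_mulVec]
    rw [hdot]
    have hx2 : 0 < ∑ v, x v ^ 2 := by
      obtain ⟨v, hv⟩ := Function.ne_iff.mp hx
      refine Finset.sum_pos' (fun u _ => sq_nonneg _) ⟨v, Finset.mem_univ v, ?_⟩
      have : x v ≠ 0 := hv
      positivity
    have := qf_lb G l hl x
    nlinarith [this, hx2]

lemma Mm_solv (hl : 0 < l) (hD : l * (G.maxDegree : ℝ) < 1) (b : V → ℝ) :
    (Mm G l).mulVec ((Mm G l)⁻¹.mulVec b) = b := by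
  have hdet : IsUnit (Mm G l).det :=
    isUnit_iff_ne_zero.mpr (ne_of_gt (Mm_posDef G l hl hD).det_pos)
  rw [Matrix.mulVec_mulVec, Matrix.mul_nonsing_inv _ hdet, Matrix.one_mulVec]


lemma hcZ_pos (hl : 0 < l) : 0 < hcZ G l := by
  rw [hcZ]
  refine Finset.sum_pos' (fun I _ => by positivity) ⟨∅, ?_, by norm_num⟩
  simp [mem_indepSets]

lemma numerator_eq : ∑ I ∈ indepSets G, (I.card : ℝ) * l ^ I.card
    = l * ∑ v, Qv G l v := by
  have hcard : ∀ I : Finset V,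
      (I.card : ℝ) * l ^ I.card = ∑ v, if v ∈ I then l ^ I.card else 0 := by
    intro I
    rw [Finset.sum_ite_mem, Finset.univ_inter, Finset.sum_const, nsmul_eq_mul]
  calc ∑ I ∈ indepSets G, (I.card : ℝ) * l ^ I.card
      = ∑ I ∈ indepSets G, ∑ v, if v ∈ I then l ^ I.card else 0 :=
        Finset.sum_congr rfl fun I _ => hcard I
    _ = ∑ v, ∑ I ∈ indepSets G, if v ∈ I then l ^ I.card else 0 := Finset.sum_comm
    _ = ∑ v, ∑ I ∈ (indepSets G).filter (fun I => v ∈ I), l ^ I.card := by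
        exact Finset.sum_congr rfl fun v _ => (Finset.sum_filter _ _).symm
    _ = ∑ v, l * Qv G l v := Finset.sum_congr rfl fun v _ => sum_contain G l v
    _ = l * ∑ v, Qv G l v := (Finset.mul_sum _ _ _).symm

lemma local_ineq (hl : 0 < l) (v : V) :
    hcZ G l ≤ (1 + l) * Qv G l v + l * ∑ u ∈ G.neighborFinset v, Qv G l u := by
  have hsplit : hcZ G l
      = ∑ I ∈ (indepSets G).filter (fun I => v ∈ I), l ^ I.card
        + ∑ I ∈ (indepSets G).filter (fun I => ¬ v ∈ I), l ^ I.card := by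
    rw [hcZ]
    exact (Finset.sum_filter_add_sum_filter_not _ _ _).symm
  have hsplit2 : ∑ I ∈ (indepSets G).filter (fun I => ¬ v ∈ I), l ^ I.card
      = ∑ I ∈ ((indepSets G).filter (fun I => ¬ v ∈ I)).filter
            (fun I => ∀ u ∈ I, ¬ G.Adj v u), l ^ I.card
        + ∑ I ∈ ((indepSets G).filter (fun I => ¬ v ∈ I)).filter
            (fun I => ¬ ∀ u ∈ I, ¬ G.Adj v u), l ^ I.card :=
    (Finset.sum_filter_add_sum_filter_not _ _ _).symm
  have h1 : ∑ I ∈ ((indepSets G).filter (fun I => ¬ v ∈ I)).filter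
      (fun I => ∀ u ∈ I, ¬ G.Adj v u), l ^ I.card = Qv G l v := by
    rw [Qv, Finset.filter_filter]
  have h2 : ∑ I ∈ ((indepSets G).filter (fun I => ¬ v ∈ I)).filter
      (fun I => ¬ ∀ u ∈ I, ¬ G.Adj v u), l ^ I.card
      ≤ l * ∑ u ∈ G.neighborFinset v, Qv G l u := by
    rw [Finset.mul_sum]
    have hrhs : ∑ u ∈ G.neighborFinset v, l * Qv G l u
        = ∑ I ∈ indepSets G, ∑ u ∈ G.neighborFinset v,
            (if u ∈ I then l ^ I.card else 0) := by
      rw [Finset.sum_comm]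
      refine Finset.sum_congr rfl fun u _ => ?_
      rw [← sum_contain G l u, Finset.sum_filter]
    rw [hrhs, Finset.filter_filter, Finset.sum_filter]
    refine Finset.sum_le_sum fun I hI => ?_
    by_cases h : ¬ v ∈ I ∧ ¬ ∀ u ∈ I, ¬ G.Adj v u
    · rw [if_pos h]
      obtain ⟨-, h2⟩ := h
      push_neg at h2
      obtain ⟨u0, hu0I, hu0a⟩ := h2
      have hu0 : u0 ∈ G.neighborFinset v := by
        rw [SimpleGraph.mem_neighborFinset]; exact hu0a
      have := Finset.single_le_sum
        (f := fun u => if u ∈ I then l ^ I.card else (0:ℝ))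
        (fun u _ => by positivity) hu0
      simp only [if_pos hu0I] at this
      exact this
    · rw [if_neg h]
      exact Finset.sum_nonneg fun u _ => by positivity
  rw [hsplit, hsplit2, h1, sum_contain G l v]
  linarith


lemma exists_weights [Nonempty V] (hl : 0 < l) (hD : l * (G.maxDegree : ℝ) < 1) :
    ∃ w : V → ℝ, (∀ v, 0 ≤ w v) ∧
      (∀ v, (1 + l) * w v + l * ∑ u ∈ G.neighborFinset v, w u = 1) ∧
      ∑ v, 1 / (1 + ((G.degree v : ℝ) + 1) * l) ≤ ∑ v, w v := by
  set D : ℝ := (G.maxDegree : ℝ) with hDdef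
  have hD0 : (0:ℝ) ≤ D := Nat.cast_nonneg _
  set t : V → ℝ := fun v => 1 / (1 + ((G.degree v : ℝ) + 1) * l) with ht
  have htden : ∀ v, (0:ℝ) < 1 + ((G.degree v : ℝ) + 1) * l := fun v => by positivity
  set s : V → ℝ := fun v => ∑ u ∈ G.neighborFinset v, (t v - t u) with hs
  set z : V → ℝ := (Mm G l)⁻¹.mulVec s with hzdef
  have hz : ∀ v, (1 + l) * z v + l * ∑ u ∈ G.neighborFinset v, z u = s v := by
    intro v
    have h := congrFun (Mm_solv G l hl hD s) v
    rwa [Mm_mulVec] at h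
  set w : V → ℝ := fun v => t v + l * z v with hwdef
  have hMw : ∀ v, (1 + l) * w v + l * ∑ u ∈ G.neighborFinset v, w u = 1 := by
    intro v
    have hsum : ∑ u ∈ G.neighborFinset v, w u
        = ∑ u ∈ G.neighborFinset v, t u + l * ∑ u ∈ G.neighborFinset v, z u := by
      rw [hwdef]
      simp only []
      rw [Finset.mul_sum, ← Finset.sum_add_distrib]
    have hsv : s v = (G.degree v : ℝ) * t v - ∑ u ∈ G.neighborFinset v, t u := by
      rw [hs]
      simp only []
      rw [Finset.sum_sub_distrib, Finset.sum_const, nsmul_eq_mul,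
        SimpleGraph.card_neighborFinset_eq_degree]
    have h1 : (1 + l) * w v + l * ∑ u ∈ G.neighborFinset v, w u
        = (1 + l) * t v + l * ∑ u ∈ G.neighborFinset v, t u
          + l * ((1 + l) * z v + l * ∑ u ∈ G.neighborFinset v, z u) := by
      rw [hsum, hwdef]; ring
    rw [h1, hz v, hsv]
    have h2 : (1 + l) * t v + l * ∑ u ∈ G.neighborFinset v, t u
          + l * ((G.degree v : ℝ) * t v - ∑ u ∈ G.neighborFinset v, t u)
        = (1 + ((G.degree v : ℝ) + 1) * l) * t v := by ring
    rw [h2, ht]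
    field_simp
  have hw0 : ∀ v, 0 ≤ w v := by
    obtain ⟨X, -, hX'⟩ := Finset.exists_max_image Finset.univ w
      ⟨Classical.arbitrary V, Finset.mem_univ _⟩
    have hX : ∀ v, w v ≤ w X := fun v => hX' v (Finset.mem_univ v)
    obtain ⟨m, -, hm'⟩ := Finset.exists_min_image Finset.univ w
      ⟨Classical.arbitrary V, Finset.mem_univ _⟩
    have hm : ∀ v, w m ≤ w v := fun v => hm' v (Finset.mem_univ v)
    have hwX0 : 0 ≤ w X := by
      by_contra hcon
      push_neg at hcon
      have hsum : ∑ u ∈ G.neighborFinset X, w u ≤ 0 :=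
        Finset.sum_nonpos fun u _ => le_of_lt (lt_of_le_of_lt (hX u) hcon)
      have t1 : (1 + l) * w X < 0 := mul_neg_of_pos_of_neg (by linarith) hcon
      have t2 : l * ∑ u ∈ G.neighborFinset X, w u ≤ 0 :=
        mul_nonpos_of_nonneg_of_nonpos hl.le hsum
      have := hMw X
      linarith
    intro v
    by_contra hv
    push_neg at hv
    have hm0 : w m < 0 := lt_of_le_of_lt (hm v) hv
    have hdm : (G.degree m : ℝ) ≤ D := by
      rw [hDdef]; exact_mod_cast G.degree_le_maxDegree m
    have hdX : (G.degree X : ℝ) ≤ D := by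
      rw [hDdef]; exact_mod_cast G.degree_le_maxDegree X
    have hSm : ∑ u ∈ G.neighborFinset m, w u ≤ D * w X := by
      calc ∑ u ∈ G.neighborFinset m, w u ≤ ∑ _u ∈ G.neighborFinset m, w X :=
            Finset.sum_le_sum fun u _ => hX u
        _ = (G.degree m : ℝ) * w X := by
            rw [Finset.sum_const, nsmul_eq_mul, SimpleGraph.card_neighborFinset_eq_degree]
        _ ≤ D * w X := mul_le_mul_of_nonneg_right hdm hwX0
    have hSX : D * w m ≤ ∑ u ∈ G.neighborFinset X, w u := by
      calc D * w m ≤ (G.degree X : ℝ) * w m := mul_le_mul_of_nonpos_right hdX hm0.le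
        _ = ∑ _u ∈ G.neighborFinset X, w m := by
            rw [Finset.sum_const, nsmul_eq_mul, SimpleGraph.card_neighborFinset_eq_degree]
        _ ≤ ∑ u ∈ G.neighborFinset X, w u := Finset.sum_le_sum fun u _ => hm u
    have h1 : 1 ≤ (1 + l) * w m + l * (D * w X) := by
      have := hMw m
      nlinarith [mul_le_mul_of_nonneg_left hSm hl.le]
    have h2 : (1 + l) * w X + l * (D * w m) ≤ 1 := by
      have := hMw X
      nlinarith [mul_le_mul_of_nonneg_left hSX hl.le]
    have h3 := mul_le_mul_of_nonneg_left h1 (by linarith : (0:ℝ) ≤ 1 + l)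
    have h4 := mul_le_mul_of_nonneg_left h2 (mul_nonneg hl.le hD0)
    have hfac : 0 < (1 + l) ^ 2 - (l * D) ^ 2 := by nlinarith [hD, hl.le, mul_nonneg hl.le hD0]
    have h5 := mul_neg_of_pos_of_neg hfac hm0
    nlinarith [h3, h4, h5, hD, hl.le]
  refine ⟨w, hw0, hMw, ?_⟩
  have hts : ∑ v, w v = ∑ v, t v + l * ∑ v, z v := by
    rw [hwdef]
    simp only []
    rw [Finset.mul_sum, ← Finset.sum_add_distrib]
  rw [hts]
  have hP : 0 ≤ ∑ v, t v * s v := by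
    have hP1 : ∑ v, t v * s v = ∑ v, ∑ u ∈ G.neighborFinset v, t v * (t v - t u) :=
      Finset.sum_congr rfl fun v _ => Finset.mul_sum _ _ _
    have hP2 : ∑ v, ∑ u ∈ G.neighborFinset v, t v * (t v - t u)
        = ∑ v, ∑ u ∈ G.neighborFinset v, t u * (t u - t v) :=
      sum_neigh_swap G (fun v u => t v * (t v - t u))
    have hP3 : ∑ v, ∑ u ∈ G.neighborFinset v, t v * (t v - t u)
          + ∑ v, ∑ u ∈ G.neighborFinset v, t u * (t u - t v)
        = ∑ v, ∑ u ∈ G.neighborFinset v, (t v - t u) ^ 2 := by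
      rw [← Finset.sum_add_distrib]
      refine Finset.sum_congr rfl fun v _ => ?_
      rw [← Finset.sum_add_distrib]
      exact Finset.sum_congr rfl fun u _ => by ring
    have hP4 : (0:ℝ) ≤ ∑ v, ∑ u ∈ G.neighborFinset v, (t v - t u) ^ 2 :=
      Finset.sum_nonneg fun v _ => Finset.sum_nonneg fun u _ => sq_nonneg _
    rw [hP1]
    linarith
  have hQ : 0 ≤ ∑ v, z v * s v := by
    have hQ1 : ∑ v, z v * s v
        = ∑ v, z v * ((1 + l) * z v + l * ∑ u ∈ G.neighborFinset v, z u) :=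
      Finset.sum_congr rfl fun v _ => by rw [hz v]
    have hQ2 := qf_lb G l hl z
    have hQ3 : (0:ℝ) ≤ (1 + l - l * D) * ∑ v, z v ^ 2 :=
      mul_nonneg (by linarith) (Finset.sum_nonneg fun v _ => sq_nonneg _)
    rw [hQ1]
    exact le_trans hQ3 hQ2
  have hZsum : 0 ≤ ∑ v, z v := by
    have e1 : ∑ v, z v
        = ∑ v, ((1 + l) * w v + l * ∑ u ∈ G.neighborFinset v, w u) * z v :=
      Finset.sum_congr rfl fun v _ => by rw [hMw v, one_mul]
    have eL : ∀ v, ((1 + l) * w v + l * ∑ u ∈ G.neighborFinset v, w u) * z v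
        = (1 + l) * (w v * z v) + l * ∑ u ∈ G.neighborFinset v, w u * z v := by
      intro v
      calc ((1 + l) * w v + l * ∑ u ∈ G.neighborFinset v, w u) * z v
          = (1 + l) * (w v * z v) + l * ((∑ u ∈ G.neighborFinset v, w u) * z v) := by ring
        _ = (1 + l) * (w v * z v) + l * ∑ u ∈ G.neighborFinset v, w u * z v := by
            rw [Finset.sum_mul]
    have eR : ∀ v, w v * ((1 + l) * z v + l * ∑ u ∈ G.neighborFinset v, z u)
        = (1 + l) * (w v * z v) + l * ∑ u ∈ G.neighborFinset v, w v * z u := by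
      intro v
      calc w v * ((1 + l) * z v + l * ∑ u ∈ G.neighborFinset v, z u)
          = (1 + l) * (w v * z v) + l * (w v * ∑ u ∈ G.neighborFinset v, z u) := by ring
        _ = (1 + l) * (w v * z v) + l * ∑ u ∈ G.neighborFinset v, w v * z u := by
            rw [Finset.mul_sum]
    have eswap : ∑ v, ∑ u ∈ G.neighborFinset v, w u * z v
        = ∑ v, ∑ u ∈ G.neighborFinset v, w v * z u :=
      sum_neigh_swap G (fun v u => w u * z v)
    have e2 : ∑ v, ((1 + l) * w v + l * ∑ u ∈ G.neighborFinset v, w u) * z v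
        = ∑ v, w v * ((1 + l) * z v + l * ∑ u ∈ G.neighborFinset v, z u) := by
      rw [Finset.sum_congr rfl fun v _ => eL v, Finset.sum_congr rfl fun v _ => eR v,
        Finset.sum_add_distrib, Finset.sum_add_distrib]
      congr 1
      rw [← Finset.mul_sum, ← Finset.mul_sum, eswap]
    have e3 : ∑ v, w v * ((1 + l) * z v + l * ∑ u ∈ G.neighborFinset v, z u)
        = ∑ v, w v * s v :=
      Finset.sum_congr rfl fun v _ => by rw [hz v]
    have e4 : ∑ v, w v * s v = ∑ v, t v * s v + l * ∑ v, z v * s v := by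
      rw [hwdef]
      simp only []
      rw [Finset.mul_sum, ← Finset.sum_add_distrib]
      exact Finset.sum_congr rfl fun v _ => by ring
    rw [e1, e2, e3, e4]
    nlinarith [hP, hQ, hl.le]
  nlinarith [hZsum, hl.le]

end OccAux

theorem stmt0 {V : Type*} [Fintype V] (G : SimpleGraph V)
    (hn : 1 ≤ Fintype.card V) (l : ℝ) (hl : 0 < l)
    (hl' : l ≤ 3 / ((G.maxDegree : ℝ) + 1) ^ 2) :
    (1 / (Fintype.card V : ℝ)) *
        ∑ u : V, l / (1 + ((G.degree u : ℝ) + 1) * l) ≤ hcE G l := by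
  classical
  haveI hne : Nonempty V := Fintype.card_pos_iff.mp (lt_of_lt_of_le Nat.zero_lt_one hn)
  set D : ℝ := (G.maxDegree : ℝ) with hDdef
  have hD0 : (0:ℝ) ≤ D := Nat.cast_nonneg _
  have hD : l * D < 1 := by
    have h1 : (0:ℝ) < (D + 1) ^ 2 := by positivity
    have h2 : l * (D + 1) ^ 2 ≤ 3 := by
      rw [le_div_iff₀ h1] at hl'
      exact hl'
    nlinarith [h2, hD0, hl.le]
  have hZ : 0 < hcZ G l := OccAux.hcZ_pos G l hl
  have hn0 : (0:ℝ) < (Fintype.card V : ℝ) := by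
    exact_mod_cast lt_of_lt_of_le Nat.zero_lt_one hn
  obtain ⟨w, hw0, hMw, hts⟩ := OccAux.exists_weights G l hl hD
  have key : hcZ G l * ∑ v, w v ≤ ∑ v, OccAux.Qv G l v := by
    calc hcZ G l * ∑ v, w v = ∑ v, w v * hcZ G l := by
          rw [Finset.mul_sum]
          exact Finset.sum_congr rfl fun v _ => mul_comm _ _
      _ ≤ ∑ v, w v * ((1 + l) * OccAux.Qv G l v
            + l * ∑ u ∈ G.neighborFinset v, OccAux.Qv G l u) :=
          Finset.sum_le_sum fun v _ =>
            mul_le_mul_of_nonneg_left (OccAux.local_ineq G l hl v) (hw0 v)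
      _ = ∑ v, OccAux.Qv G l v * ((1 + l) * w v + l * ∑ u ∈ G.neighborFinset v, w u) := by
          have eL : ∀ v, w v * ((1 + l) * OccAux.Qv G l v
                + l * ∑ u ∈ G.neighborFinset v, OccAux.Qv G l u)
              = (1 + l) * (w v * OccAux.Qv G l v)
                + l * ∑ u ∈ G.neighborFinset v, w v * OccAux.Qv G l u := by
            intro v
            calc w v * ((1 + l) * OccAux.Qv G l v
                  + l * ∑ u ∈ G.neighborFinset v, OccAux.Qv G l u)
                = (1 + l) * (w v * OccAux.Qv G l v)
                  + l * (w v * ∑ u ∈ G.neighborFinset v, OccAux.Qv G l u) := by ring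
              _ = (1 + l) * (w v * OccAux.Qv G l v)
                  + l * ∑ u ∈ G.neighborFinset v, w v * OccAux.Qv G l u := by
                  rw [Finset.mul_sum]
          have eR : ∀ v, OccAux.Qv G l v * ((1 + l) * w v
                + l * ∑ u ∈ G.neighborFinset v, w u)
              = (1 + l) * (w v * OccAux.Qv G l v)
                + l * ∑ u ∈ G.neighborFinset v, w u * OccAux.Qv G l v := by
            intro v
            calc OccAux.Qv G l v * ((1 + l) * w v + l * ∑ u ∈ G.neighborFinset v, w u)
                = (1 + l) * (w v * OccAux.Qv G l v)
                  + l * ((∑ u ∈ G.neighborFinset v, w u) * OccAux.Qv G l v) := by ring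
              _ = (1 + l) * (w v * OccAux.Qv G l v)
                  + l * ∑ u ∈ G.neighborFinset v, w u * OccAux.Qv G l v := by
                  rw [Finset.sum_mul]
          have eswap : ∑ v, ∑ u ∈ G.neighborFinset v, w v * OccAux.Qv G l u
              = ∑ v, ∑ u ∈ G.neighborFinset v, w u * OccAux.Qv G l v :=
            OccAux.sum_neigh_swap G (fun v u => w v * OccAux.Qv G l u)
          rw [Finset.sum_congr rfl fun v _ => eL v, Finset.sum_congr rfl fun v _ => eR v,
            Finset.sum_add_distrib, Finset.sum_add_distrib]
          congr 1
          rw [← Finset.mul_sum, ← Finset.mul_sum, eswap]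
      _ = ∑ v, OccAux.Qv G l v :=
          Finset.sum_congr rfl fun v _ => by rw [hMw v, mul_one]
  have key2 : hcZ G l * ∑ v, 1 / (1 + ((G.degree v : ℝ) + 1) * l)
      ≤ ∑ v, OccAux.Qv G l v :=
    le_trans (mul_le_mul_of_nonneg_left hts hZ.le) key
  rw [hcE, OccAux.numerator_eq]
  have hLHS : ∑ u : V, l / (1 + ((G.degree u : ℝ) + 1) * l)
      = l * ∑ v, 1 / (1 + ((G.degree v : ℝ) + 1) * l) := by
    rw [Finset.mul_sum]
    exact Finset.sum_congr rfl fun v _ => by rw [mul_one_div]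
  rw [hLHS]
  have hconv : (1:ℝ) / (Fintype.card V : ℝ)
        * (l * ∑ v, 1 / (1 + ((G.degree v : ℝ) + 1) * l))
      = (l * ∑ v, 1 / (1 + ((G.degree v : ℝ) + 1) * l)) / (Fintype.card V : ℝ) := by
    ring
  rw [hconv, div_le_div_iff₀ (by positivity) (by positivity)]
  have h6 := mul_le_mul_of_nonneg_left key2 (mul_nonneg hl.le hn0.le)
  nlinarith [h6]
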